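/- Let A = [[A_c, C_cp], [C_pc, A_p]] with C_pc = C_cpᵀ be a real symmetric positive definite block matrix, let S be a real symmetric positive definite m×m matrix, let G = [G_c G_p] be a real m×(c+p) matrix in conformal column blocks, and define the residual matrix G_r = G_p − G_c A_c⁻¹ C_cp. Then Tr[S⁻¹ G A⁻¹ Gᵀ] − Tr[S⁻¹ G_c A_c⁻¹ G_cᵀ] ≥ Tr[S⁻¹ G_r A_p⁻¹ G_rᵀ]. -/

import Mathlib

open Matrix

section Helpers

variable {n o : Type*} [Fintype n] [Fintype o] [DecidableEq n] [DecidableEq o]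

private lemma trace_nonneg_of_posSemidef {M : Matrix n n ℝ} (hM : M.PosSemidef) :
    0 ≤ M.trace := by
  rw [Matrix.trace]
  refine Finset.sum_nonneg fun i _ => ?_
  have := (posSemidef_iff_dotProduct_mulVec.mp hM).2 (Pi.single i 1)
  simpa [dotProduct, Matrix.mulVec, Pi.single_apply, Finset.sum_ite_eq] using this

private lemma trace_mul_nonneg {P Q : Matrix n n ℝ} (hP : P.PosSemidef) (hQ : Q.PosSemidef) :
    0 ≤ (P * Q).trace := by
  open scoped MatrixOrder Matrix.Norms.L2Operator in
  obtain ⟨B, rfl⟩ := CStarAlgebra.nonneg_iff_eq_star_mul_self.mp hP.nonneg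
  rw [Matrix.mul_assoc, Matrix.trace_mul_comm]
  exact trace_nonneg_of_posSemidef (hQ.mul_mul_conjTranspose_same B)

private lemma posDef_block11 {Ac : Matrix n n ℝ} {B : Matrix n o ℝ} {D : Matrix o o ℝ}
    (hA : (fromBlocks Ac B Bᴴ D).PosDef) : Ac.PosDef := by
  refine posDef_iff_dotProduct_mulVec.mpr ⟨(isHermitian_fromBlocks_iff.mp hA.1).1, fun x hx => ?_⟩
  have hx' : (Sum.elim x (0 : o → ℝ)) ≠ 0 := by
    intro h; exact hx (funext fun i => congrFun h (Sum.inl i))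
  have := (posDef_iff_dotProduct_mulVec.mp hA).2 hx'
  simpa [Function.star_sumElim, fromBlocks_mulVec, sumElim_dotProduct_sumElim] using this

private lemma posDef_block22 {Ac : Matrix n n ℝ} {B : Matrix n o ℝ} {D : Matrix o o ℝ}
    (hA : (fromBlocks Ac B Bᴴ D).PosDef) : D.PosDef := by
  refine posDef_iff_dotProduct_mulVec.mpr ⟨(isHermitian_fromBlocks_iff.mp hA.1).2.2.2, fun x hx => ?_⟩
  have hx' : (Sum.elim (0 : n → ℝ) x) ≠ 0 := by
    intro h; exact hx (funext fun i => congrFun h (Sum.inr i))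
  have := (posDef_iff_dotProduct_mulVec.mp hA).2 hx'
  simpa [Function.star_sumElim, fromBlocks_mulVec, sumElim_dotProduct_sumElim] using this

private lemma posDef_submatrix_equiv {M : Matrix n n ℝ} (hM : M.PosDef) (e : o ≃ n) :
    (M.submatrix e e).PosDef := by
  refine posDef_iff_dotProduct_mulVec.mpr ⟨(isHermitian_submatrix_equiv e).mpr hM.1, fun x hx => ?_⟩
  have hx' : x ∘ e.symm ≠ 0 := by
    intro h
    apply hx
    funext i
    simpa using congrFun h (e i)
  have key := (posDef_iff_dotProduct_mulVec.mp hM).2 hx'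
  have hsx : star x ∘ e.symm = star (x ∘ e.symm) := rfl
  rw [submatrix_mulVec_equiv, ← comp_equiv_symm_dotProduct, hsx]
  exact key

private lemma schur_posDef {Ac : Matrix n n ℝ} {B : Matrix n o ℝ} {D : Matrix o o ℝ}
    (hAc : Ac.PosDef) (hA : (fromBlocks Ac B Bᴴ D).PosDef) :
    (D - Bᴴ * Ac⁻¹ * B).PosDef := by
  letI := hAc.isUnit.invertible
  refine posDef_iff_dotProduct_mulVec.mpr ⟨(IsHermitian.fromBlocks₁₁ B D hAc.1).mp hA.1, fun y hy => ?_⟩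
  set x : n → ℝ := -((Ac⁻¹ * B) *ᵥ y) with hx
  have hxy : Sum.elim x y ≠ 0 := fun h => hy (funext fun i => congrFun h (Sum.inr i))
  have h0 := (posDef_iff_dotProduct_mulVec.mp hA).2 hxy
  rw [dotProduct_mulVec] at h0
  rw [show Sum.elim x y = x ⊕ᵥ y from rfl,
    schur_complement_eq₁₁ B D x y hAc.1] at h0
  simp only [hx, neg_add_cancel, star_zero, zero_vecMul, zero_dotProduct, zero_add] at h0
  rwa [← dotProduct_mulVec] at h0

private lemma block_mul_inv (Ac : Matrix n n ℝ) (B : Matrix n o ℝ) (C : Matrix o n ℝ)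
    (D : Matrix o o ℝ) (h1 : Ac * Ac⁻¹ = 1)
    (h2 : (D - C * Ac⁻¹ * B) * (D - C * Ac⁻¹ * B)⁻¹ = 1) :
    fromBlocks Ac B C D * fromBlocks
      (Ac⁻¹ + Ac⁻¹ * B * (D - C * Ac⁻¹ * B)⁻¹ * C * Ac⁻¹)
      (-(Ac⁻¹ * B * (D - C * Ac⁻¹ * B)⁻¹))
      (-((D - C * Ac⁻¹ * B)⁻¹ * C * Ac⁻¹))
      ((D - C * Ac⁻¹ * B)⁻¹) = 1 := by
  set E := (D - C * Ac⁻¹ * B)⁻¹ with hE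
  rw [Matrix.sub_mul] at h2
  have hDm : D * E = 1 + C * Ac⁻¹ * B * E := by
    rwa [sub_eq_iff_eq_add] at h2
  have e11 : Ac * (Ac⁻¹ + Ac⁻¹ * B * E * C * Ac⁻¹) + B * -(E * C * Ac⁻¹) = 1 := by
    simp only [Matrix.mul_add, Matrix.mul_neg, ← Matrix.mul_assoc, h1, Matrix.one_mul]
    abel
  have e12 : Ac * -(Ac⁻¹ * B * E) + B * E = 0 := by
    simp only [Matrix.mul_neg, ← Matrix.mul_assoc, h1, Matrix.one_mul]
    abel
  have e21 : C * (Ac⁻¹ + Ac⁻¹ * B * E * C * Ac⁻¹) + D * -(E * C * Ac⁻¹) = 0 := by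
    simp only [Matrix.mul_add, Matrix.mul_neg, ← Matrix.mul_assoc]
    rw [hDm, Matrix.add_mul, Matrix.add_mul, Matrix.one_mul]
    abel
  have e22 : C * -(Ac⁻¹ * B * E) + D * E = 1 := by
    simp only [Matrix.mul_neg, ← Matrix.mul_assoc]
    rw [hDm]
    abel
  rw [fromBlocks_multiply, e11, e12, e21, e22, fromBlocks_one]

end Helpers

/-- Paper's Theorem 2 (full form): the increase `Δη` in natural expansion score due to
adding proposed neurons is bounded below by the cheap estimate `Δη'`:
`Tr[S⁻¹ G A⁻¹ Gᵀ] − Tr[S⁻¹ G_c A_c⁻¹ G_cᵀ] ≥ Tr[S⁻¹ G_r A_p⁻¹ G_rᵀ]`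
where `A = [[A_c, C_cp], [C_cpᵀ, A_p]]` is symmetric positive definite, `S` is symmetric
positive definite, `G = [G_c G_p]` and `G_r = G_p − G_c A_c⁻¹ C_cp`. -/
theorem delta_eta_lower_bound {m c p : ℕ}
    (Ac : Matrix (Fin c) (Fin c) ℝ) (Ccp : Matrix (Fin c) (Fin p) ℝ)
    (Ap : Matrix (Fin p) (Fin p) ℝ)
    (hA : (Matrix.fromBlocks Ac Ccp Ccpᵀ Ap).PosDef)
    (S : Matrix (Fin m) (Fin m) ℝ) (hS : S.PosDef)
    (Gc : Matrix (Fin m) (Fin c) ℝ) (Gp : Matrix (Fin m) (Fin p) ℝ) :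
    (S⁻¹ * (Gp - Gc * Ac⁻¹ * Ccp) * Ap⁻¹ * (Gp - Gc * Ac⁻¹ * Ccp)ᵀ).trace ≤
      (S⁻¹ * Matrix.fromCols Gc Gp * (Matrix.fromBlocks Ac Ccp Ccpᵀ Ap)⁻¹ *
          (Matrix.fromCols Gc Gp)ᵀ).trace
        - (S⁻¹ * Gc * Ac⁻¹ * Gcᵀ).trace := by
  have hCt : Ccpᴴ = Ccpᵀ := conjTranspose_eq_transpose_of_trivial Ccp
  have hCtt : (Ccpᵀ)ᴴ = Ccp := by
    rw [conjTranspose_eq_transpose_of_trivial, transpose_transpose]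
  have hA' : (fromBlocks Ac Ccp Ccpᴴ Ap).PosDef := by rwa [hCt]
  have hAc : Ac.PosDef := posDef_block11 hA'
  have hAp : Ap.PosDef := posDef_block22 hA'
  -- the swapped matrix
  have hswap : ((fromBlocks Ap Ccpᵀ Ccp Ac).submatrix
      (Equiv.sumComm (Fin c) (Fin p)) (Equiv.sumComm (Fin c) (Fin p)))
      = fromBlocks Ac Ccp Ccpᵀ Ap := by
    ext (i | i) (j | j) <;> rfl
  have hAsw : (fromBlocks Ap Ccpᵀ Ccp Ac).PosDef := by
    rw [← hswap] at hA
    have := posDef_submatrix_equiv hA (Equiv.sumComm (Fin c) (Fin p)).symm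
    simpa using this
  have hAsw' : (fromBlocks Ap Ccpᵀ (Ccpᵀ)ᴴ Ac).PosDef := by rwa [hCtt]
  -- the two Schur complements
  have hSch : (Ap - Ccpᵀ * Ac⁻¹ * Ccp).PosDef := by
    have := schur_posDef hAc hA'
    rwa [hCt] at this
  have hSc : (Ac - Ccp * Ap⁻¹ * Ccpᵀ).PosDef := by
    have := schur_posDef hAp hAsw'
    rwa [hCtt] at this
  -- invertibility facts
  have h1 : Ac * Ac⁻¹ = 1 :=
    Matrix.mul_nonsing_inv Ac ((Matrix.isUnit_iff_isUnit_det Ac).mp hAc.isUnit)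
  have hp1 : Ap * Ap⁻¹ = 1 :=
    Matrix.mul_nonsing_inv Ap ((Matrix.isUnit_iff_isUnit_det Ap).mp hAp.isUnit)
  have hs1 : (Ap - Ccpᵀ * Ac⁻¹ * Ccp) * (Ap - Ccpᵀ * Ac⁻¹ * Ccp)⁻¹ = 1 :=
    Matrix.mul_nonsing_inv _ ((Matrix.isUnit_iff_isUnit_det _).mp hSch.isUnit)
  have hsc1 : (Ac - Ccp * Ap⁻¹ * Ccpᵀ) * (Ac - Ccp * Ap⁻¹ * Ccpᵀ)⁻¹ = 1 :=
    Matrix.mul_nonsing_inv _ ((Matrix.isUnit_iff_isUnit_det _).mp hSc.isUnit)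
  set E := (Ap - Ccpᵀ * Ac⁻¹ * Ccp)⁻¹ with hEdef
  set F := (Ac - Ccp * Ap⁻¹ * Ccpᵀ)⁻¹ with hFdef
  -- first block inverse formula
  have hNinv : (fromBlocks Ac Ccp Ccpᵀ Ap)⁻¹ = fromBlocks
      (Ac⁻¹ + Ac⁻¹ * Ccp * E * Ccpᵀ * Ac⁻¹) (-(Ac⁻¹ * Ccp * E))
      (-(E * Ccpᵀ * Ac⁻¹)) E :=
    Matrix.inv_eq_right_inv (block_mul_inv Ac Ccp Ccpᵀ Ap h1 hs1)
  -- second block inverse formula, via the swapped matrix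
  have hM2 : fromBlocks Ap Ccpᵀ Ccp Ac * fromBlocks
      (Ap⁻¹ + Ap⁻¹ * Ccpᵀ * F * Ccp * Ap⁻¹) (-(Ap⁻¹ * Ccpᵀ * F))
      (-(F * Ccp * Ap⁻¹)) F = 1 :=
    block_mul_inv Ap Ccpᵀ Ccp Ac hp1 hsc1
  have hA2 : fromBlocks Ac Ccp Ccpᵀ Ap * ((fromBlocks
      (Ap⁻¹ + Ap⁻¹ * Ccpᵀ * F * Ccp * Ap⁻¹) (-(Ap⁻¹ * Ccpᵀ * F))
      (-(F * Ccp * Ap⁻¹)) F).submatrix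
        (Equiv.sumComm (Fin c) (Fin p)) (Equiv.sumComm (Fin c) (Fin p))) = 1 := by
    rw [← hswap, submatrix_mul_equiv, hM2, submatrix_one_equiv]
  have hNinv2 := Matrix.inv_eq_right_inv hA2
  -- Woodbury identity for the (2,2) block
  have hW : E = Ap⁻¹ + Ap⁻¹ * Ccpᵀ * F * Ccp * Ap⁻¹ := by
    have h := hNinv.symm.trans hNinv2
    have h22 := congrArg Matrix.toBlocks₂₂ h
    rw [toBlocks_fromBlocks₂₂] at h22
    rw [h22]
    ext i j
    rfl
  -- symmetry facts
  have hAcs : (Ac⁻¹)ᵀ = Ac⁻¹ := by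
    rw [Matrix.transpose_nonsing_inv]
    congr 1
    have := hAc.1
    rwa [Matrix.IsHermitian, conjTranspose_eq_transpose_of_trivial] at this
  have hAps : (Ap⁻¹)ᵀ = Ap⁻¹ := by
    rw [Matrix.transpose_nonsing_inv]
    congr 1
    have := hAp.1
    rwa [Matrix.IsHermitian, conjTranspose_eq_transpose_of_trivial] at this
  set Gr := Gp - Gc * Ac⁻¹ * Ccp with hGrdef
  -- the key algebraic identity
  have hGI : fromCols Gc Gp * (fromBlocks
      (Ac⁻¹ + Ac⁻¹ * Ccp * E * Ccpᵀ * Ac⁻¹) (-(Ac⁻¹ * Ccp * E))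
      (-(E * Ccpᵀ * Ac⁻¹)) E) * (fromCols Gc Gp)ᵀ
      = Gc * (Ac⁻¹ * Gcᵀ) + Gr * (E * Grᵀ) := by
    rw [transpose_fromCols, fromCols_mul_fromBlocks, fromCols_mul_fromRows, hGrdef]
    simp only [transpose_sub, transpose_mul, hAcs, Matrix.mul_add, Matrix.add_mul,
      Matrix.mul_sub, Matrix.sub_mul, Matrix.neg_mul, Matrix.mul_neg, Matrix.mul_assoc]
    abel
  -- positive semidefiniteness of the gap
  have hEF : E - Ap⁻¹ = (Ccp * Ap⁻¹)ᴴ * F * (Ccp * Ap⁻¹) := by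
    rw [hW, add_sub_cancel_left, conjTranspose_eq_transpose_of_trivial, transpose_mul, hAps]
    simp only [Matrix.mul_assoc]
  have hgap : (E - Ap⁻¹).PosSemidef := by
    rw [hEF]
    exact hSc.inv.posSemidef.conjTranspose_mul_mul_same _
  have hQ : (Gr * ((E - Ap⁻¹) * Grᵀ)).PosSemidef := by
    have := hgap.mul_mul_conjTranspose_same Gr
    rwa [conjTranspose_eq_transpose_of_trivial, Matrix.mul_assoc] at this
  -- final computation
  rw [hNinv]
  have hexp : S⁻¹ * fromCols Gc Gp * (fromBlocks
      (Ac⁻¹ + Ac⁻¹ * Ccp * E * Ccpᵀ * Ac⁻¹) (-(Ac⁻¹ * Ccp * E))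
      (-(E * Ccpᵀ * Ac⁻¹)) E) * (fromCols Gc Gp)ᵀ
      = S⁻¹ * (Gc * (Ac⁻¹ * Gcᵀ)) + S⁻¹ * (Gr * (E * Grᵀ)) := by
    rw [Matrix.mul_assoc, Matrix.mul_assoc, ← Matrix.mul_assoc (fromCols Gc Gp), hGI,
      Matrix.mul_add]
  rw [hexp, trace_add]
  have hc : (S⁻¹ * Gc * Ac⁻¹ * Gcᵀ).trace = (S⁻¹ * (Gc * (Ac⁻¹ * Gcᵀ))).trace := by
    rw [Matrix.mul_assoc, Matrix.mul_assoc]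
  rw [hc, add_sub_cancel_left]
  have hl : S⁻¹ * Gr * Ap⁻¹ * Grᵀ = S⁻¹ * (Gr * (Ap⁻¹ * Grᵀ)) := by
    rw [Matrix.mul_assoc, Matrix.mul_assoc]
  rw [hl, ← sub_nonneg, ← Matrix.trace_sub]
  have hd : S⁻¹ * (Gr * (E * Grᵀ)) - S⁻¹ * (Gr * (Ap⁻¹ * Grᵀ))
      = S⁻¹ * (Gr * ((E - Ap⁻¹) * Grᵀ)) := by
    simp only [← Matrix.mul_sub, ← Matrix.sub_mul]
  rw [hd]
  exact trace_mul_nonneg hS.inv.posSemidef hQ
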